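/- If an intersection protocol P has no unnecessary waiting with respect to an intersection context γ, then P is optimal with respect to γ. -/

import Mathlib

open scoped Classical

noncomputable section

namespace Inter

/-- Actions available to each agent. -/
inductive Act where
  | go
  | noop
deriving DecidableEq

/-- A move through the intersection: an incoming lane paired with an outgoing lane. -/
abbrev Move (kin kout : ℕ) := Fin kin × Fin kout

/-- An adversary: a conflict-free arrival schedule, a transmission environment and
transmitter/receiver failure functions. -/
structure Adversary (kin kout : ℕ) where
  arrive : ℕ → ℕ × Fin kin × Fin kout
  conflictFree : ∀ i j : ℕ, i ≠ j → (arrive i).1 = (arrive j).1 →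
    (arrive i).2.1 ≠ (arrive j).2.1
  T : Set ((Fin kin × ℕ) × (Fin kin × ℕ))
  T_front : ∀ l l' : Fin kin, ((l, 0), (l', 0)) ∈ T
  Ft : ℕ → ℕ → Bool
  Fr : ℕ → ℕ → Bool

/-- The lane component of a sensor reading: an incoming lane, ⊥ (not yet arrived),
or ⊤ (departed). -/
inductive LaneStatus (kin : ℕ) where
  | inLane (l : Fin kin)
  | notArrived
  | finished

/-- The minimal sensor reading: front, lane and intent. -/
structure Reading (kin kout : ℕ) where
  front : Prop
  lane : LaneStatus kin
  intent : Fin kout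

/-- Environment states record the adversary, the time, a queue for each incoming lane
and the set of departed agents. -/
structure EnvState (kin kout : ℕ) where
  adv : Adversary kin kout
  time : ℕ
  queue : Fin kin → List ℕ
  done : Set ℕ

/-- Local states: a memory state together with a sensor reading
(the minimal reading plus possibly extra sensor information). -/
abbrev LState (kin kout : ℕ) (Mem Extra : Type*) := Mem × Reading kin kout × Extra

/-- Global states: an environment state and local states for all agents. -/
abbrev GState (kin kout : ℕ) (Mem Extra : Type*) :=
  EnvState kin kout × (ℕ → LState kin kout Mem Extra)

/-- A run. -/
abbrev Run (kin kout : ℕ) (Mem Extra : Type*) := ℕ → GState kin kout Mem Extra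

/-- An action protocol maps each agent's local state to an action. -/
abbrev Prot (kin kout : ℕ) (Mem Extra : Type*) := ℕ → LState kin kout Mem Extra → Act

variable {kin kout : ℕ} {Mem Extra Msg : Type*}

/-- Agent `i` is at the front of some queue. -/
def isFront (e : EnvState kin kout) (i : ℕ) : Prop :=
  ∃ l : Fin kin, (e.queue l).head? = some i

/-- The (lane, position) of agent `i`, if it is in some queue. -/
def posAt (e : EnvState kin kout) (i : ℕ) : Option (Fin kin × ℕ) :=
  if h : ∃ l : Fin kin, i ∈ e.queue l then some (h.choose, (e.queue h.choose).idxOf i)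
  else none

/-- The intended departure lane of agent `i`, as given by the arrival schedule. -/
def intentOf (e : EnvState kin kout) (i : ℕ) : Fin kout := (e.adv.arrive i).2.2

/-- The move `(lane_i, intent_i)` of agent `i`, if it is in some queue. -/
def moveAt (e : EnvState kin kout) (i : ℕ) : Option (Move kin kout) :=
  (posAt e i).map (fun p => (p.1, intentOf e i))

/-- The minimal sensor reading of agent `i` in environment state `e`. -/
def minimalReading (e : EnvState kin kout) (i : ℕ) : Reading kin kout where
  front := isFront e i
  lane :=
    if h : ∃ l : Fin kin, i ∈ e.queue l then LaneStatus.inLane h.choose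
    else if i ∈ e.done then LaneStatus.finished else LaneStatus.notArrived
  intent := intentOf e i

/-- An information-exchange protocol: initial memories, extra sensor information,
a message function and a memory-update function. -/
structure IEP (kin kout : ℕ) (Mem Extra Msg : Type*) where
  initMem : ℕ → Mem
  extra : EnvState kin kout → ℕ → Extra
  msg : ℕ → LState kin kout Mem Extra → Act → Reading kin kout × Extra → Option Msg
  upd : ℕ → LState kin kout Mem Extra → Act → Set Msg → Mem

/-- One round of the system: agents act, queues are updated (dequeues for agents that go,
enqueues for new arrivals), new sensor readings are taken, messages are broadcast and
received subject to the transmission environment and the failure functions, and memories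
are updated. -/
def step (E : IEP kin kout Mem Extra Msg) (P : Prot kin kout Mem Extra)
    (g : GState kin kout Mem Extra) : GState kin kout Mem Extra :=
  let e := g.1
  let act : ℕ → Act := fun i => P i (g.2 i)
  let q' : Fin kin → List ℕ := fun l =>
    let q1 := match (e.queue l).head? with
      | some i => if act i = Act.go then (e.queue l).tail else e.queue l
      | none => e.queue l
    if h : ∃ i l', e.adv.arrive i = (e.time + 1, l, l') then q1 ++ [h.choose] else q1
  let done' : Set ℕ := e.done ∪ {i | isFront e i ∧ act i = Act.go}
  let e' : EnvState kin kout := ⟨e.adv, e.time + 1, q', done'⟩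
  let sens : ℕ → Reading kin kout × Extra := fun i => (minimalReading e' i, E.extra e' i)
  let rcv : ℕ → Set Msg := fun i =>
    if e.adv.Fr e.time i = true ∧ (posAt e' i).isSome = true then
      {m | ∃ j pj pi, E.msg j (g.2 j) (act j) (sens j) = some m ∧
            e.adv.Ft e.time j = true ∧
            posAt e' j = some pj ∧ posAt e' i = some pi ∧ (pj, pi) ∈ e.adv.T}
    else ∅
  (e', fun i => (E.upd i (g.2 i) (act i) (rcv i), sens i))

/-- An intersection context: an information-exchange protocol together with an
adversary model. -/
structure Ctx (kin kout : ℕ) (Mem Extra Msg : Type*) where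
  iep : IEP kin kout Mem Extra Msg
  adv : Set (Adversary kin kout)

/-- Initial global states: time 0, empty queues, no departed agents, an adversary
from the adversary model, and initial local states. -/
def Init (C : Ctx kin kout Mem Extra Msg) (g : GState kin kout Mem Extra) : Prop :=
  g.1.adv ∈ C.adv ∧ g.1.time = 0 ∧ (∀ l, g.1.queue l = []) ∧ g.1.done = ∅ ∧
  ∀ i, g.2 i = (C.iep.initMem i, minimalReading g.1 i, C.iep.extra g.1 i)

/-- The interpreted system `I_{γ,P}`: the set of runs of protocol `P` in context `γ`. -/
def Runs (C : Ctx kin kout Mem Extra Msg) (P : Prot kin kout Mem Extra) :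
    Set (Run kin kout Mem Extra) :=
  {r | Init C (r 0) ∧ ∀ m, r (m + 1) = step C.iep P (r m)}

/-- `front_i` holds at the point `(r,m)`. -/
def frontAt (r : Run kin kout Mem Extra) (m i : ℕ) : Prop := isFront (r m).1 i

/-- `going_i` abbreviates `front_i ∧ ◯¬front_i`. -/
def goingAt (r : Run kin kout Mem Extra) (m i : ℕ) : Prop :=
  frontAt r m i ∧ ¬ frontAt r (m + 1) i

/-- `GO(r,m)`: the set of agents that go through the intersection in round `m+1`. -/
def GOs (r : Run kin kout Mem Extra) (m : ℕ) : Set ℕ := {i | goingAt r m i}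

/-- Validity: an agent goes through the intersection only from the front of its queue. -/
def ValidityP (C : Ctx kin kout Mem Extra Msg) (P : Prot kin kout Mem Extra) : Prop :=
  ∀ r ∈ Runs C P, ∀ m i, goingAt r m i → frontAt r m i

/-- Safety: agents that go simultaneously have compatible moves. -/
def SafetyP (O : Move kin kout → Move kin kout → Prop)
    (C : Ctx kin kout Mem Extra Msg) (P : Prot kin kout Mem Extra) : Prop :=
  ∀ r ∈ Runs C P, ∀ m i j, i ≠ j → goingAt r m i → goingAt r m j →
    ∀ mi mj, moveAt (r m).1 i = some mi → moveAt (r m).1 j = some mj → O mi mj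

/-- Liveness: every agent at the front of a queue eventually goes. -/
def LivenessP (C : Ctx kin kout Mem Extra Msg) (P : Prot kin kout Mem Extra) : Prop :=
  ∀ r ∈ Runs C P, ∀ m i, frontAt r m i → ∃ m' ≥ m, goingAt r m' i

/-- An intersection protocol: an action protocol satisfying Validity, Safety and Liveness. -/
def IsIntersectionProtocol (O : Move kin kout → Move kin kout → Prop)
    (C : Ctx kin kout Mem Extra Msg) (P : Prot kin kout Mem Extra) : Prop :=
  ValidityP C P ∧ SafetyP O C P ∧ LivenessP C P

/-- `safe-to-go_i` at `(r,m)`: `i` is at the front of its queue (position 0) and the moves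
of the agents in `GO(r,m) ∪ {i}` are pairwise compatible. -/
def safeToGo (O : Move kin kout → Move kin kout → Prop)
    (r : Run kin kout Mem Extra) (m i : ℕ) : Prop :=
  (∃ p, posAt (r m).1 i = some p ∧ p.2 = 0) ∧
  ∀ j ∈ GOs r m ∪ {i}, ∀ k ∈ GOs r m ∪ {i}, j ≠ k →
    ∀ mj mk, moveAt (r m).1 j = some mj → moveAt (r m).1 k = some mk → O mj mk

/-- `P` has unnecessary waiting with respect to `γ`. -/
def UnnecessaryWaiting (O : Move kin kout → Move kin kout → Prop)
    (C : Ctx kin kout Mem Extra Msg) (P : Prot kin kout Mem Extra) : Prop :=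
  ∃ r ∈ Runs C P, ∃ m i, safeToGo O r m i ∧ i ∉ GOs r m

/-- The time at which agent `i` goes through the intersection in run `r` (∞ if never). -/
def gotime (r : Run kin kout Mem Extra) (i : ℕ) : ℕ∞ :=
  sInf {n : ℕ∞ | ∃ m : ℕ, goingAt r m i ∧ n = (m : ℕ∞)}

/-- `P` dominates `P'`: on all corresponding runs, every agent goes at least as early. -/
def Dominates (C : Ctx kin kout Mem Extra Msg) (P P' : Prot kin kout Mem Extra) : Prop :=
  ∀ r ∈ Runs C P, ∀ r' ∈ Runs C P', r 0 = r' 0 → ∀ i, gotime r i ≤ gotime r' i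

def StrictDominates (C : Ctx kin kout Mem Extra Msg) (P P' : Prot kin kout Mem Extra) : Prop :=
  Dominates C P P' ∧ ¬ Dominates C P' P

/-- `P` is optimal: no intersection protocol strictly dominates it. -/
def Optimal (O : Move kin kout → Move kin kout → Prop)
    (C : Ctx kin kout Mem Extra Msg) (P : Prot kin kout Mem Extra) : Prop :=
  ¬ ∃ P' : Prot kin kout Mem Extra,
      IsIntersectionProtocol O C P' ∧ StrictDominates C P' P

/-- `P` lexicographically dominates `P'`. -/
def LexDominates (C : Ctx kin kout Mem Extra Msg) (P P' : Prot kin kout Mem Extra) : Prop :=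
  ∀ r ∈ Runs C P, ∀ r' ∈ Runs C P', r 0 = r' 0 →
    (∀ m, GOs r m = GOs r' m) ∨
    ∃ m, (∀ k < m, GOs r k = GOs r' k) ∧ GOs r m ≠ GOs r' m ∧ GOs r' m ⊂ GOs r m

def StrictLexDominates (C : Ctx kin kout Mem Extra Msg) (P P' : Prot kin kout Mem Extra) :
    Prop :=
  LexDominates C P P' ∧ ¬ LexDominates C P' P

/-- `P` is lexicographically optimal: no intersection protocol strictly lexicographically
dominates it. -/
def LexOptimal (O : Move kin kout → Move kin kout → Prop)
    (C : Ctx kin kout Mem Extra Msg) (P : Prot kin kout Mem Extra) : Prop :=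
  ¬ ∃ P' : Prot kin kout Mem Extra,
      IsIntersectionProtocol O C P' ∧ StrictLexDominates C P' P

/-- Knowledge: `K_i φ` holds at `(r,m)` iff `φ` holds at all points of the system where
agent `i` has the same local state. -/
def Kn (S : Set (Run kin kout Mem Extra)) (i : ℕ)
    (φ : Run kin kout Mem Extra → ℕ → Prop) (r : Run kin kout Mem Extra) (m : ℕ) : Prop :=
  ∀ r' ∈ S, ∀ m', (r' m').2 i = (r m).2 i → φ r' m'

/-- The adversary model has no failures. -/
def NoFailures (C : Ctx kin kout Mem Extra Msg) : Prop :=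
  ∀ α ∈ C.adv, ∀ k i, α.Ft k i = true ∧ α.Fr k i = true

/-- Full information exchange: every agent broadcasts (an injective encoding of) its
entire local state in every round, and records every broadcast it receives. -/
def FullInfo (C : Ctx kin kout Mem Extra Msg) : Prop :=
  (∃ enc : LState kin kout Mem Extra → Msg, Function.Injective enc ∧
      ∀ i s a o, C.iep.msg i s a o = some (enc s)) ∧
  (∀ i s a, Function.Injective fun B : Set Msg => C.iep.upd i s a B)

/-- A sufficiently rich context: every agent that will be at the front of some lane
broadcasts a message encoding its lane and intent, tagged as coming from the front;
no other message is tagged as a front message; and each agent records the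
(lane, intent) pair of each front agent it hears from. -/
def SufficientlyRich (C : Ctx kin kout Mem Extra Msg) : Prop :=
  ∃ dec : Msg → Option (Move kin kout),
    (∀ i s a (o : Reading kin kout × Extra) (l : Fin kin),
        o.1.front → o.1.lane = LaneStatus.inLane l →
        ∃ msg, C.iep.msg i s a o = some msg ∧ dec msg = some (l, o.1.intent)) ∧
    (∀ i s a (o : Reading kin kout × Extra), ¬ o.1.front →
        ∀ msg, C.iep.msg i s a o = some msg → dec msg = none) ∧
    (∃ rec : Mem → Set (Move kin kout),
        ∀ i s a B, rec (C.iep.upd i s a B) = {mv | ∃ msg ∈ B, dec msg = some mv})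

/-- The set of agents at the front of a queue. -/
def FrontSet (e : EnvState kin kout) : Set ℕ := {i | isFront e i}

/-- `P` depends only on the agents at the front of their queues. -/
def DependsOnlyOnFront (C : Ctx kin kout Mem Extra Msg) (P : Prot kin kout Mem Extra) :
    Prop :=
  ∀ r ∈ Runs C P, ∀ r' ∈ Runs C P, ∀ m m' i,
    FrontSet (r m).1 = FrontSet (r' m').1 → P i ((r m).2 i) = P i ((r' m').2 i)

/-- The choices of an adversary in a single round: arrivals, the transmission
environment and the failure values. -/
structure Choice (kin kout : ℕ) where
  arrivals : Set (ℕ × Fin kin × Fin kout)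
  T : Set ((Fin kin × ℕ) × (Fin kin × ℕ))
  Ft : ℕ → Bool
  Fr : ℕ → Bool

/-- The choices of adversary `α` in round `m+1`. -/
def choiceAt (α : Adversary kin kout) (m : ℕ) : Choice kin kout where
  arrivals := {p | α.arrive p.1 = (m + 1, p.2.1, p.2.2)}
  T := α.T
  Ft := fun i => α.Ft m i
  Fr := fun i => α.Fr m i

/-- The adversary history `H(α,m) = ⟨α_0, …, α_{m-1}⟩`. -/
def hist (α : Adversary kin kout) (m : ℕ) : List (Choice kin kout) :=
  (List.range m).map (choiceAt α)

/-- The adversary history of run `r` up to time `m`. -/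
def histOf (r : Run kin kout Mem Extra) (m : ℕ) : List (Choice kin kout) :=
  hist (r 0).1.adv m

/-- An intersection policy: a map from adversary histories to sets of permitted moves. -/
abbrev Policy (kin kout : ℕ) := List (Choice kin kout) → Set (Move kin kout)

/-- The set `H_γ` of adversary histories of the context. -/
def Hists (C : Ctx kin kout Mem Extra Msg) : Set (List (Choice kin kout)) :=
  {h | ∃ α ∈ C.adv, ∃ m, h = hist α m}

/-- A feasible infinite sequence of histories: one arising from a single adversary. -/
def Feasible (F : Set (Adversary kin kout)) (h : ℕ → List (Choice kin kout)) : Prop :=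
  ∃ α ∈ F, ∀ m, h m = hist α m

/-- Conflict-freedom of an intersection policy. -/
def ConflictFree (O : Move kin kout → Move kin kout → Prop)
    (C : Ctx kin kout Mem Extra Msg) (σ : Policy kin kout) : Prop :=
  ∀ h ∈ Hists C, ∀ mv ∈ σ h, ∀ mv' ∈ σ h, mv ≠ mv' → O mv mv'

/-- Fairness of an intersection policy. -/
def FairPolicy (C : Ctx kin kout Mem Extra Msg) (σ : Policy kin kout) : Prop :=
  ∀ h : ℕ → List (Choice kin kout), Feasible C.adv h →
    ∀ mv : Move kin kout, ∀ m, ∃ m' ≥ m, mv ∈ σ (h m')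

/-- A correct intersection policy: conflict-free and fair. -/
def CorrectPolicy (O : Move kin kout → Move kin kout → Prop)
    (C : Ctx kin kout Mem Extra Msg) (σ : Policy kin kout) : Prop :=
  ConflictFree O C σ ∧ FairPolicy C σ

/-- A synchronous context: the time is encoded in each agent's local state. -/
def Synchronous (C : Ctx kin kout Mem Extra Msg) : Prop :=
  ∃ clock : LState kin kout Mem Extra → ℕ,
    ∀ P : Prot kin kout Mem Extra, ∀ r ∈ Runs C P, ∀ m i, clock ((r m).2 i) = m

/-- The knowledge condition of the knowledge-based program `P^σ`:
`front_i ∧ (lane_i, intent_i) ∈ σ`. -/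
def phiSigma (σ : Policy kin kout) (i : ℕ) (r : Run kin kout Mem Extra) (m : ℕ) : Prop :=
  frontAt r m i ∧ ∃ mv, moveAt (r m).1 i = some mv ∧ mv ∈ σ (histOf r m)

/-- `P` implements the knowledge-based program `if K_i φ_i then go else noop` in `γ`. -/
def Implements (C : Ctx kin kout Mem Extra Msg) (P : Prot kin kout Mem Extra)
    (φ : ℕ → Run kin kout Mem Extra → ℕ → Prop) : Prop :=
  ∀ r ∈ Runs C P, ∀ m i, (P i ((r m).2 i) = Act.go ↔ Kn (Runs C P) i (φ i) r m)

/-- Behavioral equivalence: the protocols take the same actions at all reachable states. -/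
def BehEq (C : Ctx kin kout Mem Extra Msg) (P P' : Prot kin kout Mem Extra) : Prop :=
  (∀ r ∈ Runs C P, ∀ m i, P i ((r m).2 i) = P' i ((r m).2 i)) ∧
  (∀ r ∈ Runs C P', ∀ m i, P i ((r m).2 i) = P' i ((r m).2 i))

/-- `γ` is `σ`-aware. -/
def SigmaAware (C : Ctx kin kout Mem Extra Msg) (σ : Policy kin kout) : Prop :=
  ∀ P : Prot kin kout Mem Extra, ∀ r ∈ Runs C P, ∀ m i (l : Fin kin) (l' : Fin kout),
    (l, l') ∈ σ (histOf r m) → i ∈ (r m).1.queue l →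
    Kn (Runs C P) i (fun r' m' => (l, l') ∈ σ (histOf r' m')) r m

/-- `γ` is `next`-aware. -/
def NextAware (C : Ctx kin kout Mem Extra Msg)
    (next : List (Choice kin kout) → Fin kin) : Prop :=
  ∀ P : Prot kin kout Mem Extra, ∀ r ∈ Runs C P, ∀ m i (l : Fin kin),
    next (histOf r m) = l →
    Kn (Runs C P) i (fun r' m' => next (histOf r' m') = l) r m

/-- Cyclic distance from `a` to `b` (mod `kin`). -/
def distC (a b : Fin kin) : ℕ := (b.val + kin - a.val) % kin

/-- `l` lies in the cyclic interval `[a, b)` of incoming lanes. -/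
def inCyc (a b l : Fin kin) : Prop := distC a l < distC a b

/-- `mv` is compatible with every move in `S`. -/
def compatAll (O : Move kin kout → Move kin kout → Prop)
    (S : Set (Move kin kout)) (mv : Move kin kout) : Prop :=
  ∀ mv' ∈ S, O mv mv'

/-- The proposition `V_i` of the knowledge-based program `𝐏`. -/
def Vprop (O : Move kin kout → Move kin kout → Prop) (σ : Policy kin kout)
    (next : List (Choice kin kout) → Fin kin) (i : ℕ)
    (r : Run kin kout Mem Extra) (m : ℕ) : Prop :=
  ∃ mv, moveAt (r m).1 i = some mv ∧ mv ∉ σ (histOf r m) ∧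
    (∀ j mj, goingAt r m j → moveAt (r m).1 j = some mj →
        mj ∈ σ (histOf r m) → O mv mj) ∧
    (∀ j mj, j ≠ i → goingAt r m j → moveAt (r m).1 j = some mj →
        mj ∉ σ (histOf r m) → inCyc (next (histOf r m)) mv.1 mj.1 → O mv mj)

/-- The knowledge condition of the knowledge-based program `𝐏`:
`front_i ∧ ((lane_i, intent_i) ∈ σ ∨ V_i)`. -/
def phiP (O : Move kin kout → Move kin kout → Prop) (σ : Policy kin kout)
    (next : List (Choice kin kout) → Fin kin) (i : ℕ)
    (r : Run kin kout Mem Extra) (m : ℕ) : Prop :=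
  frontAt r m i ∧
    ((∃ mv, moveAt (r m).1 i = some mv ∧ mv ∈ σ (histOf r m)) ∨ Vprop O σ next i r m)

/-- Fairness of a `next` function. -/
def FairNext (C : Ctx kin kout Mem Extra Msg)
    (next : List (Choice kin kout) → Fin kin) : Prop :=
  ∀ h : ℕ → List (Choice kin kout), Feasible C.adv h →
    ∀ m (l : Fin kin), ∃ m' ≥ m, next (h m') = l

/-- Fairness of a pair `(σ, next)`. -/
def PairFair (O : Move kin kout → Move kin kout → Prop)
    (C : Ctx kin kout Mem Extra Msg) (σ : Policy kin kout)
    (next : List (Choice kin kout) → Fin kin) : Prop :=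
  ∀ h : ℕ → List (Choice kin kout), Feasible C.adv h →
    ∀ m (mv : Move kin kout), ∃ m' ≥ m,
      mv ∈ σ (h m') ∨ (next (h m') = mv.1 ∧ compatAll O (σ (h m')) mv)

/-- `next(h) = |h| mod |L_in|` at time `t`. -/
def nextL (hkin : 0 < kin) (t : ℕ) : Fin kin := ⟨t % kin, Nat.mod_lt _ hkin⟩

/-- The stages of the construction of the set `Pos_i`, starting from the lane `nxt` and
proceeding in cyclic order; `M` is the set of moves received from front agents
(empty when there is no communication). -/
def posStage (hkin : 0 < kin) (O : Move kin kout → Move kin kout → Prop)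
    (M : Set (Move kin kout)) (nxt : Fin kin) : ℕ → Set (Move kin kout)
  | 0 => ∅
  | t + 1 =>
    let S := posStage hkin O M nxt t
    let l : Fin kin := ⟨(nxt.val + t) % kin, Nat.mod_lt _ hkin⟩
    if ∃ l' : Fin kout, (l, l') ∈ M then
      S ∪ {mv | mv.1 = l ∧ mv ∈ M ∧ compatAll O S mv}
    else
      S ∪ {mv | mv.1 = l ∧ compatAll O S mv}

/-- The set `Pos_i` computed from the received moves `M`, the lane `nxt = next` and the
agent's own lane `lanei`. -/
def PosSet (hkin : 0 < kin) (O : Move kin kout → Move kin kout → Prop)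
    (M : Set (Move kin kout)) (nxt lanei : Fin kin) : Set (Move kin kout) :=
  posStage hkin O M nxt (distC nxt lanei)

/-- The stage `Pos_i^l` of the construction of `Pos_i`, for a lane `l` in the cyclic
interval `[nxt, lane_i)`. -/
def PosUpTo (hkin : 0 < kin) (O : Move kin kout → Move kin kout → Prop)
    (M : Set (Move kin kout)) (nxt l : Fin kin) : Set (Move kin kout) :=
  posStage hkin O M nxt (distC nxt l + 1)

/-- The adversary model with no failures. -/
def NFadv (kin kout : ℕ) : Set (Adversary kin kout) :=
  {α | ∀ k i, α.Ft k i = true ∧ α.Fr k i = true}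

/-- The adversary model with crash failures. -/
def CRadv (kin kout : ℕ) : Set (Adversary kin kout) :=
  {α | (∀ k i, α.Fr k i = true) ∧
    ∀ k i, α.Ft k i = false → ∀ k', k < k' → α.Ft k' i = false}

/-- The adversary model with sending omissions. -/
def SOadv (kin kout : ℕ) : Set (Adversary kin kout) :=
  {α | ∀ k i, α.Fr k i = true}

/-- The information-exchange protocol of `γ_∅`: a single memory state, no messages,
and sensor readings `⟨front_i, lane_i, intent_i, time_i⟩`. -/
def E0 (kin kout : ℕ) : IEP kin kout Unit ℕ Empty where
  initMem _ := ()
  extra e _ := e.time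
  msg _ _ _ _ := none
  upd _ _ _ _ := ()

/-- The context `γ_∅(F)`. -/
def gammaEmpty (kin kout : ℕ) (F : Set (Adversary kin kout)) : Ctx kin kout Unit ℕ Empty :=
  ⟨E0 kin kout, F⟩

/-- The protocol `P^∅`: go iff at the front and own move compatible with `Pos_i`. -/
def Pempty (hkin : 0 < kin) (O : Move kin kout → Move kin kout → Prop) :
    Prot kin kout Unit ℕ := fun _ s =>
  match s.2.1.lane with
  | LaneStatus.inLane l =>
      if s.2.1.front ∧ compatAll O (PosSet hkin O ∅ (nextL hkin s.2.2) l) (l, s.2.1.intent)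
      then Act.go else Act.noop
  | _ => Act.noop

/-- The information-exchange protocol of `γ_intent`: exactly the agents at the front of a
lane broadcast `(lane_i, intent_i)`; the memory is the set of moves received in the
current round; sensor readings are `⟨front_i, lane_i, intent_i, time_i⟩`. -/
def Eintent (kin kout : ℕ) : IEP kin kout (Set (Move kin kout)) ℕ (Move kin kout) where
  initMem _ := ∅
  extra e _ := e.time
  msg _ _ _ o :=
    if o.1.front then
      match o.1.lane with
      | LaneStatus.inLane l => some (l, o.1.intent)
      | _ => none
    else none
  upd _ _ _ B := B

/-- The context `γ_intent(F)`. -/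
def gammaIntent (kin kout : ℕ) (F : Set (Adversary kin kout)) :
    Ctx kin kout (Set (Move kin kout)) ℕ (Move kin kout) :=
  ⟨Eintent kin kout, F⟩

/-- The protocol `P^intent`: go iff at the front and own move compatible with `Pos_i`
computed from the received moves. -/
def Pintent (hkin : 0 < kin) (O : Move kin kout → Move kin kout → Prop) :
    Prot kin kout (Set (Move kin kout)) ℕ := fun _ s =>
  match s.2.1.lane with
  | LaneStatus.inLane l =>
      if s.2.1.front ∧
          compatAll O (PosSet hkin O s.1 (nextL hkin s.2.2) l) (l, s.2.1.intent)
      then Act.go else Act.noop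
  | _ => Act.noop

end Inter

open Inter

namespace NWOptProof

variable {kin kout : ℕ} {Mem Extra Msg : Type*}

/-- The dequeue part of one round of queue evolution. -/
def deq (q : List ℕ) (act : ℕ → Act) : List ℕ :=
  match q.head? with
  | some i => if act i = Act.go then q.tail else q
  | none => q

/-- One round of queue evolution. -/
def queueStep (A : Adversary kin kout) (t : ℕ) (q : List ℕ) (act : ℕ → Act)
    (l : Fin kin) : List ℕ :=
  if h : ∃ i l', A.arrive i = (t + 1, l, l') then deq q act ++ [h.choose] else deq q act

lemma deq_subset (q : List ℕ) (act : ℕ → Act) : deq q act ⊆ q := by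
  unfold deq
  split
  · split
    · exact List.tail_subset q
    · exact fun a h => h
  · exact fun a h => h

lemma deq_of_not_go {q : List ℕ} {act : ℕ → Act} {i : ℕ}
    (h : q.head? = some i) (hgo : act i ≠ Act.go) : deq q act = q := by
  unfold deq; rw [h]; exact if_neg hgo

lemma deq_of_go {q : List ℕ} {act : ℕ → Act} {i : ℕ}
    (h : q.head? = some i) (hgo : act i = Act.go) : deq q act = q.tail := by
  unfold deq; rw [h]; exact if_pos hgo

lemma eq_cons_of_head? {q : List ℕ} {i : ℕ} (h : q.head? = some i) :
    q = i :: q.tail := by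
  cases q with
  | nil => simp at h
  | cons a t => simp only [List.head?_cons, Option.some.injEq] at h; rw [h]; rfl

lemma mem_queueStep {A : Adversary kin kout} {t : ℕ} {q : List ℕ} {act : ℕ → Act}
    {l : Fin kin} {i : ℕ} (h : i ∈ queueStep A t q act l) :
    i ∈ deq q act ∨ ((A.arrive i).1 = t + 1 ∧ (A.arrive i).2.1 = l) := by
  unfold queueStep at h
  split at h
  case isTrue hex =>
    rcases List.mem_append.mp h with h | h
    · exact Or.inl h
    · right
      obtain ⟨l', hl'⟩ := hex.choose_spec
      have hi : i = hex.choose := by simpa using h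
      subst hi
      rw [hl']
      exact ⟨rfl, rfl⟩
  case isFalse => exact Or.inl h

lemma queueStep_congr {A : Adversary kin kout} {t : ℕ} {q : List ℕ} {l : Fin kin}
    {act act' : ℕ → Act}
    (h : ∀ i, q.head? = some i → (act i = Act.go ↔ act' i = Act.go)) :
    queueStep A t q act l = queueStep A t q act' l := by
  have hd : deq q act = deq q act' := by
    unfold deq
    cases hq : q.head? with
    | none => rfl
    | some i => exact if_congr (h i hq) rfl rfl
  unfold queueStep
  rw [hd]

section RunLemmas

variable {C : Ctx kin kout Mem Extra Msg} {P : Prot kin kout Mem Extra}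
  {r : Run kin kout Mem Extra}

lemma run_env_succ (hr : r ∈ Runs C P) (m : ℕ) :
    (r (m + 1)).1 = ⟨(r m).1.adv, (r m).1.time + 1,
      fun l => queueStep (r m).1.adv (r m).1.time ((r m).1.queue l)
        (fun i => P i ((r m).2 i)) l,
      (r m).1.done ∪ {i | isFront (r m).1 i ∧ P i ((r m).2 i) = Act.go}⟩ := by
  rw [hr.2 m]; rfl

lemma run_time (hr : r ∈ Runs C P) : ∀ m, (r m).1.time = m := by
  intro m
  induction m with
  | zero => exact hr.1.2.1
  | succ n ih => rw [run_env_succ hr n]; simpa using ih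

lemma run_inv (hr : r ∈ Runs C P) : ∀ m,
    (∀ l, ((r m).1.queue l).Nodup) ∧
    (∀ i l, i ∈ (r m).1.queue l →
      ((r m).1.adv.arrive i).2.1 = l ∧ ((r m).1.adv.arrive i).1 ≤ m ∧
        i ∉ (r m).1.done) ∧
    (∀ i ∈ (r m).1.done, ((r m).1.adv.arrive i).1 ≤ m) := by
  intro m
  induction m with
  | zero =>
    refine ⟨fun l => ?_, fun i l h => ?_, fun i h => ?_⟩
    · rw [hr.1.2.2.1 l]; exact List.nodup_nil
    · rw [hr.1.2.2.1 l] at h; simp at h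
    · rw [hr.1.2.2.2.1] at h; simp at h
  | succ n ih =>
    obtain ⟨ihnd, ihmem, ihdone⟩ := ih
    have htime := run_time hr n
    have hstep := run_env_succ hr n
    -- facts about the appended element
    have happ : ∀ l (hex : ∃ i l', (r n).1.adv.arrive i = ((r n).1.time + 1, l, l')),
        ((r n).1.adv.arrive hex.choose).1 = n + 1 ∧
        ((r n).1.adv.arrive hex.choose).2.1 = l := by
      intro l hex
      obtain ⟨l', hl'⟩ := hex.choose_spec
      rw [hl', htime]
      simp
    constructor
    · -- Nodup
      intro l
      rw [hstep]
      show (queueStep _ _ _ _ l).Nodup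
      unfold queueStep
      have hnd : (deq ((r n).1.queue l) (fun i => P i ((r n).2 i))).Nodup := by
        unfold deq
        split
        · split
          · exact (ihnd l).sublist (List.tail_sublist _)
          · exact ihnd l
        · exact ihnd l
      split
      case isTrue hex =>
        refine List.Nodup.append hnd (List.nodup_singleton _) ?_
        intro a ha hb
        have ha' : a ∈ (r n).1.queue l := deq_subset _ _ ha
        have h1 := (ihmem a l ha').2.1
        have hb' : a = hex.choose := by simpa using hb
        have h2 := (happ l hex).1
        rw [← hb'] at h2
        omega
      case isFalse => exact hnd
    constructor
    · -- membership invariant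
      intro i l hi
      rw [hstep] at hi
      replace hi : i ∈ queueStep (r n).1.adv (r n).1.time ((r n).1.queue l)
          (fun j => P j ((r n).2 j)) l := hi
      have hdone_eq : (r (n+1)).1.done =
          (r n).1.done ∪ {j | isFront (r n).1 j ∧ P j ((r n).2 j) = Act.go} := by
        rw [hstep]
      have hadv : (r (n+1)).1.adv = (r n).1.adv := by rw [hstep]
      rw [hadv, hdone_eq]
      rcases mem_queueStep hi with hq | ⟨h1, h2⟩
      · have hq' : i ∈ (r n).1.queue l := deq_subset _ _ hq
        obtain ⟨hl1, hl2, hl3⟩ := ihmem i l hq'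
        refine ⟨hl1, by omega, ?_⟩
        rintro (hd | ⟨hf, hgo⟩)
        · exact hl3 hd
        · -- i is at the front and goes, but i remains in the dequeued list
          obtain ⟨l'', hl''⟩ := hf
          have hmem'' : i ∈ (r n).1.queue l'' := List.mem_of_mem_head? hl''
          have : l'' = l := by
            have e1 := (ihmem i l'' hmem'').1
            have e2 := (ihmem i l hq').1
            rw [← e1, e2]
          subst this
          rw [deq_of_go hl'' hgo] at hq
          have := ihnd l''
          rw [eq_cons_of_head? hl''] at this
          exact (List.nodup_cons.mp this).1 hq
      · rw [htime] at h1
        refine ⟨h2, by omega, ?_⟩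
        rintro (hd | ⟨hf, _⟩)
        · have := ihdone i hd; omega
        · obtain ⟨l'', hl''⟩ := hf
          have := (ihmem i l'' (List.mem_of_mem_head? hl'')).2.1
          omega
    · -- done invariant
      intro i hi
      have hdone_eq : (r (n+1)).1.done =
          (r n).1.done ∪ {j | isFront (r n).1 j ∧ P j ((r n).2 j) = Act.go} := by
        rw [hstep]
      have hadv : (r (n+1)).1.adv = (r n).1.adv := by rw [hstep]
      rw [hdone_eq] at hi
      rw [hadv]
      rcases hi with hd | ⟨hf, _⟩
      · have := ihdone i hd; omega
      · obtain ⟨l'', hl''⟩ := hf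
        have := (ihmem i l'' (List.mem_of_mem_head? hl'')).2.1
        omega

lemma going_iff (hr : r ∈ Runs C P) {m : ℕ} {i : ℕ} (hf : frontAt r m i) :
    goingAt r m i ↔ P i ((r m).2 i) = Act.go := by
  obtain ⟨l, hl⟩ := hf
  constructor
  · intro hg
    by_contra hgo
    apply hg.2
    refine ⟨l, ?_⟩
    rw [run_env_succ hr m]
    show (queueStep _ _ _ _ l).head? = some i
    unfold queueStep
    have hd : deq ((r m).1.queue l) (fun j => P j ((r m).2 j)) = (r m).1.queue l :=
      deq_of_not_go hl hgo
    split
    · rw [hd, eq_cons_of_head? hl]; rfl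
    · rw [hd]; exact hl
  · intro hgo
    refine ⟨⟨l, hl⟩, ?_⟩
    rintro ⟨l', hl'⟩
    have hmem' : i ∈ (r (m+1)).1.queue l' := List.mem_of_mem_head? hl'
    rw [run_env_succ hr m] at hmem'
    replace hmem' : i ∈ queueStep (r m).1.adv (r m).1.time ((r m).1.queue l')
        (fun j => P j ((r m).2 j)) l' := hmem'
    have hmem : i ∈ (r m).1.queue l := List.mem_of_mem_head? hl
    obtain ⟨inv1, inv2, inv3⟩ := run_inv hr m
    rcases mem_queueStep hmem' with hq | ⟨ht, _⟩
    · have hqq : i ∈ (r m).1.queue l' := deq_subset _ _ hq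
      have hll : l' = l := by
        have e1 := (inv2 i l' hqq).1
        have e2 := (inv2 i l hmem).1
        rw [← e1, e2]
      subst hll
      rw [deq_of_go hl hgo] at hq
      have hnd := inv1 l'
      rw [eq_cons_of_head? hl] at hnd
      exact (List.nodup_cons.mp hnd).1 hq
    · rw [run_time hr m] at ht
      have := (inv2 i l hmem).2.1
      omega

lemma done_succ_of_going (hr : r ∈ Runs C P) {m i : ℕ} (hg : goingAt r m i) :
    i ∈ (r (m + 1)).1.done := by
  rw [run_env_succ hr m]
  exact Or.inr ⟨hg.1, (going_iff hr hg.1).mp hg⟩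

lemma done_mono (hr : r ∈ Runs C P) {m m' : ℕ} (h : m ≤ m') :
    (r m).1.done ⊆ (r m').1.done := by
  induction m', h using Nat.le_induction with
  | base => exact subset_rfl
  | succ n hn ih =>
    refine ih.trans ?_
    rw [run_env_succ hr n]
    exact Set.subset_union_left

lemma not_front_of_done (hr : r ∈ Runs C P) {m i : ℕ} (hd : i ∈ (r m).1.done) :
    ¬ frontAt r m i := by
  rintro ⟨l, hl⟩
  exact ((run_inv hr m).2.1 i l (List.mem_of_mem_head? hl)).2.2 hd

lemma going_unique (hr : r ∈ Runs C P) {k m i : ℕ}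
    (h1 : goingAt r k i) (h2 : goingAt r m i) : k = m := by
  rcases lt_trichotomy k m with h | h | h
  · exact absurd h2.1
      (not_front_of_done hr (done_mono hr h (done_succ_of_going hr h1)))
  · exact h
  · exact absurd h1.1
      (not_front_of_done hr (done_mono hr h (done_succ_of_going hr h2)))

lemma posAt_front (hr : r ∈ Runs C P) {m i : ℕ} (hf : isFront (r m).1 i) :
    ∃ p, posAt (r m).1 i = some p ∧ p.2 = 0 := by
  obtain ⟨l, hl⟩ := hf
  have hm : i ∈ (r m).1.queue l := List.mem_of_mem_head? hl
  have hex : ∃ l', i ∈ (r m).1.queue l' := ⟨l, hm⟩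
  have hch : i ∈ (r m).1.queue hex.choose := hex.choose_spec
  have hcl : hex.choose = l := by
    have e1 := ((run_inv hr m).2.1 i hex.choose hch).1
    have e2 := ((run_inv hr m).2.1 i l hm).1
    rw [← e1, e2]
  refine ⟨(hex.choose, 0), ?_, rfl⟩
  unfold posAt
  rw [dif_pos hex]
  have hidx : ((r m).1.queue hex.choose).idxOf i = 0 := by
    rw [hcl, eq_cons_of_head? hl]
    exact List.idxOf_cons_self
  rw [hidx]

end RunLemmas

lemma gotime_le_of_going {r : Run kin kout Mem Extra} {m i : ℕ}
    (h : goingAt r m i) : gotime r i ≤ (m : ℕ∞) :=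
  sInf_le ⟨m, h, rfl⟩

lemma exists_going_of_gotime_le {r : Run kin kout Mem Extra} {m i : ℕ}
    (h : gotime r i ≤ (m : ℕ∞)) : ∃ k ≤ m, goingAt r k i := by
  by_contra hc
  push_neg at hc
  have hge : ((m + 1 : ℕ) : ℕ∞) ≤ gotime r i := by
    refine le_sInf ?_
    rintro n ⟨k, hk, rfl⟩
    have : m < k := by
      by_contra h'
      exact hc k (not_lt.mp h') hk
    exact_mod_cast Nat.succ_le_of_lt this
  have := hge.trans h
  have : (m + 1 : ℕ) ≤ m := by exact_mod_cast this
  omega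

section Main

variable {C : Ctx kin kout Mem Extra Msg} {P P' : Prot kin kout Mem Extra}
  {r r' : Run kin kout Mem Extra}

lemma env_step_eq (hr : r ∈ Runs C P) (hr' : r' ∈ Runs C P') {m : ℕ}
    (he : (r m).1 = (r' m).1) (hGO : GOs r m = GOs r' m) :
    (r (m + 1)).1 = (r' (m + 1)).1 := by
  have hact : ∀ (i : ℕ), (∃ l, ((r m).1.queue l).head? = some i) →
      ((P i ((r m).2 i) = Act.go) ↔ (P' i ((r' m).2 i) = Act.go)) := by
    rintro i ⟨l, hi⟩
    have hf : frontAt r m i := ⟨l, hi⟩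
    have hf' : frontAt r' m i := ⟨l, by rw [show (r' m).1 = (r m).1 from he.symm]; exact hi⟩
    rw [← going_iff hr hf, ← going_iff hr' hf']
    exact Set.ext_iff.mp hGO i
  rw [run_env_succ hr m, run_env_succ hr' m, ← he]
  simp only [EnvState.mk.injEq]
  refine ⟨trivial, trivial, ?_, ?_⟩
  · funext l
    exact queueStep_congr (fun i hi => hact i ⟨l, hi⟩)
  · congr 1
    ext i
    simp only [Set.mem_setOf_eq]
    constructor
    · rintro ⟨hf, hgo⟩
      exact ⟨hf, (hact i hf).mp hgo⟩
    · rintro ⟨hf, hgo⟩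
      exact ⟨hf, (hact i hf).mpr hgo⟩

end Main

end NWOptProof

open NWOptProof

/-- If an intersection protocol `P` has no unnecessary waiting with respect
to an intersection context `γ`, then `P` is optimal with respect to `γ`. -/
theorem no_unnecessary_waiting_implies_optimal
    {kin kout : ℕ} {Mem Extra Msg : Type*}
    (O : Move kin kout → Move kin kout → Prop)
    (hO : ∀ a b, O a b → O b a)
    (C : Ctx kin kout Mem Extra Msg) (P : Prot kin kout Mem Extra)
    (hP : IsIntersectionProtocol O C P)
    (hnw : ¬ UnnecessaryWaiting O C P) :
    Optimal O C P := by
  rintro ⟨P', hP', hdom, hnd⟩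
  apply hnd
  intro r hr r' hr' h0 i0
  -- `r ∈ Runs C P`, `r' ∈ Runs C P'`, `r 0 = r' 0`; we show the gotimes agree.
  have env_eq_of : ∀ m, (∀ k, k < m → GOs r k = GOs r' k) → (r m).1 = (r' m).1 := by
    intro m
    induction m with
    | zero => intro _; exact congrArg Prod.fst h0
    | succ n ih =>
      intro h
      exact env_step_eq hr hr' (ih fun k hk => h k (hk.trans n.lt_succ_self))
        (h n n.lt_succ_self)
  have GOeq : ∀ m, GOs r m = GOs r' m := by
    intro m
    induction m using Nat.strong_induction_on with
    | _ m ih =>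
      have he : (r m).1 = (r' m).1 := env_eq_of m ih
      have hsub : GOs r m ⊆ GOs r' m := by
        intro j hj
        have h1 : gotime r' j ≤ (m : ℕ∞) :=
          (hdom r' hr' r hr h0.symm j).trans (gotime_le_of_going hj)
        obtain ⟨k, hk, hgk⟩ := exists_going_of_gotime_le h1
        rcases eq_or_lt_of_le hk with rfl | hk'
        · exact hgk
        · exfalso
          have hrk : j ∈ GOs r k := (ih k hk') ▸ hgk
          exact absurd (going_unique hr hrk hj) (Nat.ne_of_lt hk')
      by_contra hne
      have hex : ∃ i, i ∈ GOs r' m ∧ i ∉ GOs r m := by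
        by_contra h'
        push_neg at h'
        exact hne (hsub.antisymm h')
      obtain ⟨i, hi', hi⟩ := hex
      apply hnw
      refine ⟨r, hr, m, i, ⟨?_, ?_⟩, hi⟩
      · have hf : isFront (r m).1 i := by
          have : isFront (r' m).1 i := hi'.1
          rwa [← he] at this
        exact posAt_front hr hf
      · intro j hj k hk hjk mj mk hmj hmk
        have hj' : j ∈ GOs r' m := by
          rcases hj with hj | hj
          · exact hsub hj
          · exact Set.mem_singleton_iff.mp hj ▸ hi'
        have hk' : k ∈ GOs r' m := by
          rcases hk with hk | hk
          · exact hsub hk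
          · exact Set.mem_singleton_iff.mp hk ▸ hi'
        rw [he] at hmj hmk
        exact hP'.2.1 r' hr' m j k hjk hj' hk' mj mk hmj hmk
  have envall : ∀ m, (r m).1 = (r' m).1 := fun m => env_eq_of m fun k _ => GOeq k
  have goiff : ∀ m, goingAt r m i0 ↔ goingAt r' m i0 := fun m =>
    Set.ext_iff.mp (GOeq m) i0
  have : gotime r i0 = gotime r' i0 := by
    unfold gotime
    congr 1
    ext n
    constructor
    · rintro ⟨m, hm, rfl⟩; exact ⟨m, (goiff m).mp hm, rfl⟩
    · rintro ⟨m, hm, rfl⟩; exact ⟨m, (goiff m).mpr hm, rfl⟩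
  exact le_of_eq this
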